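/- For the cycle graph of length ℓ ≥ 3 (viewed as a hypergraph whose hyperedges are the ℓ cycle edges), the clique embedding power satisfies emb ≥ 2 − 1/⌈ℓ/2⌉. Concretely: if ℓ is odd, there is an embedding of the ℓ-clique into the ℓ-cycle with weak edge depth (ℓ+1)/2; if ℓ is even, there is an embedding of the (ℓ−1)-clique into the ℓ-cycle with weak edge depth ℓ/2. -/

import Mathlib

open Finset

structure Hypergraph' (V : Type*) [DecidableEq V] [Fintype V] where
  edges : Finset (Finset V)

namespace Hypergraph'

variable {V : Type*} [DecidableEq V] [Fintype V]

/-- Two vertex sets touch in `H`: they intersect, or some hyperedge meets both. -/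
def touch (H : Hypergraph' V) (S T : Finset V) : Prop :=
  (S ∩ T).Nonempty ∨ ∃ e ∈ H.edges, (e ∩ S).Nonempty ∧ (e ∩ T).Nonempty

/-- `S` induces a connected subhypergraph of `H`. -/
def connSet (H : Hypergraph' V) (S : Finset V) : Prop :=
  ∀ a ∈ S, ∀ b ∈ S,
    Relation.ReflTransGen (fun x y => x ∈ S ∧ y ∈ S ∧ ∃ e ∈ H.edges, x ∈ e ∧ y ∈ e) a b

/-- An embedding of the `k`-clique into the hypergraph `H`. -/
def IsCliqueEmb (H : Hypergraph' V) (k : ℕ) (ψ : Fin k → Finset V) : Prop :=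
  (∀ i, (ψ i).Nonempty) ∧ (∀ i, H.connSet (ψ i)) ∧
    ∀ i j : Fin k, i ≠ j → H.touch (ψ i) (ψ j)

/-- The weak edge depth of an embedding: the max over hyperedges `e` of the number
of clique vertices whose image meets `e`. -/
def wedOf (H : Hypergraph' V) {k : ℕ} (ψ : Fin k → Finset V) : ℕ :=
  H.edges.sup fun e => (Finset.univ.filter fun i : Fin k => ((ψ i) ∩ e).Nonempty).card

/-- `wed (C_k ↦ H)`: the minimum weak edge depth over embeddings of the `k`-clique. -/
noncomputable def wed (H : Hypergraph' V) (k : ℕ) : ℕ :=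
  sInf {w | ∃ ψ : Fin k → Finset V, H.IsCliqueEmb k ψ ∧ H.wedOf ψ ≤ w}

end Hypergraph'

/-- A tree decomposition of a hypergraph. -/
structure IsTreeDecomp {V : Type*} [DecidableEq V] [Fintype V] {ι : Type*}
    (H : Hypergraph' V) (T : SimpleGraph ι) (χ : ι → Finset V) : Prop where
  tree : T.IsTree
  covers : ∀ e ∈ H.edges, ∃ t, e ⊆ χ t
  conn : ∀ v : V, (T.induce {t | v ∈ χ t}).Connected

/-- The clique embedding power of a hypergraph. -/
noncomputable def embPower {V : Type*} [DecidableEq V] [Fintype V] (H : Hypergraph' V) : ℝ :=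
  sSup {x : ℝ | ∃ k : ℕ, 3 ≤ k ∧ x = (k : ℝ) / (H.wed k : ℝ)}

/-- The `ℓ`-cycle as a hypergraph: vertices `Fin ℓ`, hyperedges `{i, i+1}`. -/
def cycleHG (ℓ : ℕ) [NeZero ℓ] : Hypergraph' (Fin ℓ) :=
  ⟨Finset.univ.image fun i : Fin ℓ => ({i, i + 1} : Finset (Fin ℓ))⟩

open Fin.NatCast
open Fin.CommRing

set_option linter.unusedSectionVars false

section Toolkit
variable {ℓ : ℕ} [NeZero ℓ]

lemma sub_val' (a b : Fin ℓ) :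
    (a - b).val = if b.val ≤ a.val then a.val - b.val else ℓ + a.val - b.val := by
  rw [Fin.sub_def]
  have ha := a.isLt; have hb := b.isLt
  simp only []
  rcases le_or_gt b.val a.val with h | h
  · rw [if_pos h]
    have : ℓ - b.val + a.val = ℓ + (a.val - b.val) := by omega
    rw [this, Nat.add_mod_left, Nat.mod_eq_of_lt (by omega)]
  · rw [if_neg (by omega), Nat.mod_eq_of_lt (by omega)]
    omega

lemma add_val' (a b : Fin ℓ) :
    (a + b).val = if a.val + b.val < ℓ then a.val + b.val else a.val + b.val - ℓ := by
  rw [Fin.add_def]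
  have ha := a.isLt; have hb := b.isLt
  simp only []
  rcases lt_or_ge (a.val + b.val) ℓ with h | h
  · rw [if_pos h, Nat.mod_eq_of_lt h]
  · rw [if_neg (by omega), Nat.mod_eq_sub_mod h, Nat.mod_eq_of_lt (by omega)]

lemma natCast_val' (j : ℕ) (h : j < ℓ) : ((j : Fin ℓ)).val = j := by
  rw [Fin.val_natCast, Nat.mod_eq_of_lt h]

/-- arc starting at `a` of length `m`. -/
def arc (a : Fin ℓ) (m : ℕ) : Finset (Fin ℓ) :=
  (Finset.range m).image (fun j : ℕ => a + (j : Fin ℓ))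

lemma mem_arc {a x : Fin ℓ} {m : ℕ} (hm : m ≤ ℓ) : x ∈ arc a m ↔ (x - a).val < m := by
  constructor
  · rintro hx
    simp only [arc, Finset.mem_image, Finset.mem_range] at hx
    obtain ⟨j, hj, rfl⟩ := hx
    have : (a + (j : Fin ℓ) - a) = (j : Fin ℓ) := by ring
    rw [this, natCast_val' j (by omega)]
    exact hj
  · intro h
    simp only [arc, Finset.mem_image, Finset.mem_range]
    refine ⟨(x - a).val, h, ?_⟩
    rw [Fin.cast_val_eq_self]
    ring

lemma arc_card {a : Fin ℓ} {m : ℕ} (hm : m ≤ ℓ) : (arc a m).card = m := by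
  rw [arc, Finset.card_image_of_injOn, Finset.card_range]
  intro x hx y hy hxy
  simp only [Finset.mem_range, Finset.mem_coe] at hx hy
  have h2 : ((x : Fin ℓ)) = ((y : Fin ℓ)) := by
    have hxy' : a + (x : Fin ℓ) = a + (y : Fin ℓ) := hxy
    have : (a + (x : Fin ℓ) - a) = (a + (y : Fin ℓ) - a) := by rw [hxy']
    rwa [add_sub_cancel_left, add_sub_cancel_left] at this
  have := congrArg Fin.val h2
  rwa [natCast_val' x (by omega), natCast_val' y (by omega)] at this

lemma arc_self {a : Fin ℓ} {m : ℕ} (h0 : 0 < m) (hm : m ≤ ℓ) : a ∈ arc a m := by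
  rw [mem_arc hm, sub_self]; simpa using h0

lemma mem_edges_iff {e : Finset (Fin ℓ)} :
    e ∈ (cycleHG ℓ).edges ↔ ∃ t : Fin ℓ, e = {t, t + 1} := by
  simp [cycleHG, eq_comm]

lemma edge_mem (t : Fin ℓ) : ({t, t+1} : Finset (Fin ℓ)) ∈ (cycleHG ℓ).edges := by
  rw [mem_edges_iff]; exact ⟨t, rfl⟩

end Toolkit

section ConnTouch
variable {ℓ : ℕ} [NeZero ℓ]

lemma one_val' (h : 1 < ℓ) : (1 : Fin ℓ).val = 1 := by
  have : ((1:ℕ) : Fin ℓ).val = 1 := natCast_val' 1 h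
  simpa using this

lemma arc_conn {a : Fin ℓ} {m : ℕ} (hm : m ≤ ℓ) (hℓ : 1 < ℓ) :
    (cycleHG ℓ).connSet (arc a m) := by
  classical
  set S := arc a m with hS
  set R := (fun x y : Fin ℓ => x ∈ S ∧ y ∈ S ∧ ∃ e ∈ (cycleHG ℓ).edges, x ∈ e ∧ y ∈ e) with hR
  have hRsymm : Symmetric R := by
    rintro x y ⟨h1, h2, e, he, hx, hy⟩
    exact ⟨h2, h1, e, he, hy, hx⟩
  have hmemj : ∀ j : ℕ, j < m → a + (j : Fin ℓ) ∈ S := by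
    intro j hj
    rw [hS, mem_arc hm, add_sub_cancel_left, natCast_val' j (by omega)]
    exact hj
  have hreach : ∀ j : ℕ, j < m → Relation.ReflTransGen R a (a + (j : Fin ℓ)) := by
    intro j
    induction j with
    | zero => intro _; simpa using Relation.ReflTransGen.refl
    | succ j ih =>
      intro hj
      refine (ih (by omega)).tail ?_
      refine ⟨hmemj j (by omega), hmemj (j+1) hj, {a + (j:Fin ℓ), (a + (j:Fin ℓ)) + 1}, edge_mem _, by simp, ?_⟩
      have : a + ((j+1 : ℕ) : Fin ℓ) = (a + (j:Fin ℓ)) + 1 := by push_cast; ring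
      rw [this]; simp
  intro x hx y hy
  rw [hS, mem_arc hm] at hx hy
  have hx' : a + (((x - a).val : ℕ) : Fin ℓ) = x := by rw [Fin.cast_val_eq_self]; ring
  have hy' : a + (((y - a).val : ℕ) : Fin ℓ) = y := by rw [Fin.cast_val_eq_self]; ring
  have r1 : Relation.ReflTransGen R a x := by rw [← hx']; exact hreach _ hx
  have r2 : Relation.ReflTransGen R a y := by rw [← hy']; exact hreach _ hy
  exact Relation.ReflTransGen.trans (@Std.Symm.symm _ _ (@Relation.ReflTransGen.stdSymm _ R ⟨fun _ _ h => hRsymm h⟩) _ _ r1) r2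

lemma arc_touch {a b : Fin ℓ} {m n : ℕ} (hℓ : 1 < ℓ) (hm1 : 0 < m) (hn1 : 0 < n)
    (hm : m ≤ ℓ) (hn : n ≤ ℓ) (hd : (b - a).val ≤ m) :
    (cycleHG ℓ).touch (arc a m) (arc b n) := by
  rcases lt_or_eq_of_le hd with hlt | heq
  · left
    exact ⟨b, Finset.mem_inter.2 ⟨(mem_arc hm).2 hlt, arc_self hn1 hn⟩⟩
  · right
    refine ⟨{b - 1, (b-1) + 1}, edge_mem _, ⟨b - 1, ?_⟩, ⟨b, ?_⟩⟩
    · rw [Finset.mem_inter]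
      constructor
      · simp
      · rw [mem_arc hm]
        have h1 : (b - 1 - a) = (b - a) - 1 := by ring
        have hd1 : 0 < (b - a).val := by omega
        rw [h1, sub_val', one_val' hℓ, if_pos (by omega)]
        omega
    · rw [Finset.mem_inter]
      constructor
      · simp [sub_add_cancel]
      · exact arc_self hn1 hn

end ConnTouch

section Count
variable {ℓ : ℕ} [NeZero ℓ]

lemma touch_symm {S T : Finset (Fin ℓ)} (h : (cycleHG ℓ).touch S T) : (cycleHG ℓ).touch T S := by
  rcases h with ⟨x, hx⟩ | ⟨e, he, h1, h2⟩
  · exact Or.inl ⟨x, by rwa [Finset.inter_comm]⟩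
  · exact Or.inr ⟨e, he, h2, h1⟩

lemma counted_iff {s t : Fin ℓ} {len : ℕ} (hℓ : 1 < ℓ) (hlen1 : 0 < len) (hlen : len < ℓ) :
    (arc s len ∩ ({t, t + 1} : Finset (Fin ℓ))).Nonempty ↔ (t + 1 - s).val ≤ len := by
  set v := (t + 1 - s).val with hv
  constructor
  · rintro ⟨x, hx⟩
    rw [Finset.mem_inter, Finset.mem_insert, Finset.mem_singleton] at hx
    obtain ⟨hxa, hx2⟩ := hx
    rw [mem_arc (le_of_lt hlen)] at hxa
    rcases hx2 with heq | heq
    · rw [heq] at hxa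
      by_cases h0 : v = 0
      · omega
      · have he : t - s = (t + 1 - s) - 1 := by ring
        have : (t - s).val = v - 1 := by
          rw [he, sub_val', one_val' hℓ, if_pos (by omega)]
        omega
    · rw [heq] at hxa
      omega
  · intro hvle
    by_cases h0 : v = 0
    · have hts : t + 1 = s := by
        have := Fin.cast_val_eq_self (t + 1 - s)
        rw [← hv] at this
        have h2 : t + 1 - s = 0 := by
          have : ((v : ℕ) : Fin ℓ) = t + 1 - s := by rw [hv, Fin.cast_val_eq_self]
          rw [h0] at this; simpa using this.symm
        have := sub_eq_zero.1 h2
        exact this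
      refine ⟨t + 1, Finset.mem_inter.2 ⟨?_, by simp⟩⟩
      rw [hts]
      exact arc_self hlen1 (le_of_lt hlen)
    · refine ⟨t, Finset.mem_inter.2 ⟨?_, by simp⟩⟩
      rw [mem_arc (le_of_lt hlen)]
      have he : t - s = (t + 1 - s) - 1 := by ring
      rw [he, sub_val', one_val' hℓ, if_pos (by omega)]
      omega

lemma mem_window {s t : Fin ℓ} {len L : ℕ} (hL : len ≤ L) (hLl : L < ℓ)
    (h : (t + 1 - s).val ≤ len) : s ∈ arc (t + 1 - (L : Fin ℓ)) (L + 1) := by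
  rw [mem_arc (by omega)]
  have he : s - (t + 1 - (L : Fin ℓ)) = (L : Fin ℓ) - (t + 1 - s) := by ring
  rw [he, sub_val', natCast_val' L hLl]
  split
  · omega
  · omega

lemma wedOf_le {k : ℕ} (ψ : Fin k → Finset (Fin ℓ)) {D : ℕ}
    (h : ∀ t : Fin ℓ,
      ((Finset.univ.filter fun i : Fin k => ((ψ i) ∩ ({t, t + 1} : Finset (Fin ℓ))).Nonempty).card ≤ D)) :
    (cycleHG ℓ).wedOf ψ ≤ D := by
  apply Finset.sup_le
  intro e he
  rw [mem_edges_iff] at he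
  obtain ⟨t, rfl⟩ := he
  exact h t

lemma odd_emb (hℓ : 3 ≤ ℓ) (hodd : Odd ℓ) :
    ∃ ψ : Fin ℓ → Finset (Fin ℓ),
      (cycleHG ℓ).IsCliqueEmb ℓ ψ ∧ (cycleHG ℓ).wedOf ψ ≤ (ℓ + 1) / 2 := by
  have hℓ1 : 1 < ℓ := by omega
  set m := (ℓ - 1) / 2 with hm
  have hℓm : ℓ = 2 * m + 1 := by
    obtain ⟨c, hc⟩ := hodd; omega
  have hm1 : 0 < m := by omega
  have hmℓ : m < ℓ := by omega
  refine ⟨fun i => arc i m, ⟨fun i => ⟨i, arc_self hm1 (by omega)⟩,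
    fun i => arc_conn (by omega) hℓ1, ?_⟩, ?_⟩
  · intro i j hij
    have hd : (j - i).val + (i - j).val = ℓ := by
      have hne : i.val ≠ j.val := fun h => hij (Fin.ext h)
      have hi := i.isLt; have hj := j.isLt
      rw [sub_val', sub_val']
      split <;> split <;> omega
    rcases le_or_gt ((j - i).val) m with h | h
    · exact arc_touch hℓ1 hm1 hm1 (by omega) (by omega) h
    · exact touch_symm (arc_touch hℓ1 hm1 hm1 (by omega) (by omega) (by omega))
  · have hD : (ℓ + 1) / 2 = m + 1 := by omega
    rw [hD]
    apply wedOf_le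
    intro t
    have hsub : ∀ i : Fin ℓ,
        i ∈ (Finset.univ.filter fun i : Fin ℓ => ((arc i m) ∩ ({t, t + 1} : Finset (Fin ℓ))).Nonempty)
        → i ∈ arc (t + 1 - (m : Fin ℓ)) (m + 1) := by
      intro i hi
      rw [Finset.mem_filter] at hi
      exact mem_window (le_refl m) hmℓ ((counted_iff hℓ1 hm1 hmℓ).1 hi.2)
    calc _ ≤ (arc (t + 1 - (m : Fin ℓ)) (m + 1)).card :=
            Finset.card_le_card_of_injOn id (fun i hi => hsub i hi) (fun a _ b _ h => h)
      _ = m + 1 := arc_card (by omega)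

end Count

section Even
variable {ℓ : ℕ} [NeZero ℓ]

lemma sub_val_cases (a b : Fin ℓ) :
    (a - b).val + b.val = a.val ∨ (a - b).val + b.val = ℓ + a.val := by
  have ha := a.isLt; have hb := b.isLt
  rw [sub_val']
  split
  · left; omega
  · right; omega

lemma arc_subset_pred {a : Fin ℓ} {w : ℕ} (hℓ : 1 < ℓ) (hw : w + 1 ≤ ℓ) :
    arc a w ⊆ arc (a - 1) (w + 1) := by
  intro x hx
  rw [mem_arc (by omega)] at hx
  rw [mem_arc hw]
  have he : x - (a - 1) = (x - a) + 1 := by ring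
  rw [he, add_val', one_val' hℓ, if_pos (by omega)]
  omega

lemma even_emb (hℓ : 3 ≤ ℓ) (heven : Even ℓ) :
    ∃ ψ : Fin (ℓ - 1) → Finset (Fin ℓ),
      (cycleHG ℓ).IsCliqueEmb (ℓ - 1) ψ ∧ (cycleHG ℓ).wedOf ψ ≤ ℓ / 2 := by
  have hℓ4 : 4 ≤ ℓ := by
    obtain ⟨c, hc⟩ := heven; omega
  have hℓ1 : 1 < ℓ := by omega
  set m := (ℓ - 2) / 2 with hm
  have hℓm : ℓ = 2 * m + 2 := by obtain ⟨c, hc⟩ := heven; omega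
  have hm1 : 0 < m := by omega
  set s : Fin (ℓ - 1) → Fin ℓ := fun i => ⟨i.val, by omega⟩ with hs
  set len : Fin (ℓ - 1) → ℕ := fun i => if m + 1 ≤ i.val then m + 1 else m with hlen
  have hlen_cases : ∀ i, (len i = m + 1 ∧ m + 1 ≤ i.val) ∨ (len i = m ∧ i.val ≤ m) := by
    intro i
    by_cases h : m + 1 ≤ i.val
    · exact Or.inl ⟨by simp only [hlen, if_pos h], h⟩
    · exact Or.inr ⟨by simp only [hlen, if_neg h], by omega⟩
  have hlen1 : ∀ i, 0 < len i := by intro i; rcases hlen_cases i with ⟨h, _⟩ | ⟨h, _⟩ <;> omega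
  have hlenM : ∀ i, len i ≤ m + 1 := by intro i; rcases hlen_cases i with ⟨h, _⟩ | ⟨h, _⟩ <;> omega
  have hlenℓ : ∀ i, len i < ℓ := by intro i; have := hlenM i; omega
  refine ⟨fun i => arc (s i) (len i),
    ⟨fun i => ⟨s i, arc_self (hlen1 i) (le_of_lt (hlenℓ i))⟩,
     fun i => arc_conn (le_of_lt (hlenℓ i)) hℓ1, ?_⟩, ?_⟩
  · intro i j hij
    have hne : i.val ≠ j.val := fun h => hij (Fin.ext h)
    have hij' : (s i).val = i.val := rfl
    have hji' : (s j).val = j.val := rfl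
    have hi2 := i.isLt; have hj2 := j.isLt
    have c1 := sub_val_cases (s j) (s i)
    have c2 := sub_val_cases (s i) (s j)
    have l1 := (s j - s i).isLt
    have l2 := (s i - s j).isLt
    have key : (s j - s i).val ≤ len i ∨ (s i - s j).val ≤ len j := by
      rcases hlen_cases i with ⟨hi, hi'⟩ | ⟨hi, hi'⟩ <;>
        rcases hlen_cases j with ⟨hj, hj'⟩ | ⟨hj, hj'⟩ <;>
        rw [hi, hj] <;> rw [hij', hji'] at c1 c2 <;> omega
    rcases key with h | h
    · exact arc_touch hℓ1 (hlen1 i) (hlen1 j) (le_of_lt (hlenℓ i)) (le_of_lt (hlenℓ j)) h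
    · exact touch_symm (arc_touch hℓ1 (hlen1 j) (hlen1 i) (le_of_lt (hlenℓ j)) (le_of_lt (hlenℓ i)) h)
  · have hD : ℓ / 2 = m + 1 := by omega
    rw [hD]
    apply wedOf_le
    intro t
    set W := arc (t + 1 - (((m + 1 : ℕ)) : Fin ℓ)) (m + 2) with hW
    set shortW := arc (t + 1 - ((m : ℕ) : Fin ℓ)) (m + 1) with hshortW
    have hWsub : shortW ⊆ W := by
      have he : t + 1 - (((m + 1 : ℕ)) : Fin ℓ) = (t + 1 - ((m : ℕ) : Fin ℓ)) - 1 := by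
        push_cast; ring
      rw [hW, hshortW, he]
      exact arc_subset_pred hℓ1 (by omega)
    set Cnt := (Finset.univ.filter fun i : Fin (ℓ - 1) =>
      ((arc (s i) (len i)) ∩ ({t, t + 1} : Finset (Fin ℓ))).Nonempty) with hCnt
    have hmemW : ∀ i ∈ Cnt, s i ∈ W := by
      intro i hi
      rw [hCnt, Finset.mem_filter] at hi
      have hv := (counted_iff hℓ1 (hlen1 i) (hlenℓ i)).1 hi.2
      exact mem_window (le_trans hv (hlenM i)) (by omega) (le_refl _)
    set z0 : Fin ℓ := ⟨ℓ - 1, by omega⟩ with hz0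
    have hsne : ∀ i : Fin (ℓ - 1), s i ≠ z0 := by
      intro i h
      have h1 : (s i).val = z0.val := congrArg Fin.val h
      have h2 : (s i).val = i.val := rfl
      have h3 : z0.val = ℓ - 1 := rfl
      have h4 := i.isLt
      omega
    have hinj : Set.InjOn s ↑Cnt := by
      intro a _ b _ h
      have h2 : (s a).val = (s b).val := congrArg Fin.val h
      exact Fin.ext h2
    have hcard : ∀ z ∈ W, (∀ i ∈ Cnt, s i ≠ z) → Cnt.card ≤ m + 1 := by
      intro z hz hne
      have : Cnt.card ≤ (W.erase z).card := by
        apply Finset.card_le_card_of_injOn s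
        · intro i hi
          exact Finset.mem_erase.2 ⟨hne i hi, hmemW i hi⟩
        · exact hinj
      rw [Finset.card_erase_of_mem hz, hW, arc_card (by omega)] at this
      omega
    by_cases hzin : z0 ∈ shortW
    · exact hcard z0 (hWsub hzin) (fun i _ => hsne i)
    · apply hcard (t + 1 - (((m + 1 : ℕ)) : Fin ℓ))
      · rw [hW]; exact arc_self (by omega) (by omega)
      · intro i hi heq
        rw [hCnt, Finset.mem_filter] at hi
        have hv := (counted_iff hℓ1 (hlen1 i) (hlenℓ i)).1 hi.2
        have hvval : (t + 1 - s i).val = m + 1 := by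
          rw [heq]
          have : t + 1 - (t + 1 - (((m + 1 : ℕ)) : Fin ℓ)) = (((m + 1 : ℕ)) : Fin ℓ) := by ring
          rw [this, natCast_val' (m+1) (by omega)]
        have hlong : m + 1 ≤ i.val := by
          rcases hlen_cases i with ⟨h, h'⟩ | ⟨h, h'⟩
          · exact h'
          · omega
        apply hzin
        rw [hshortW, mem_arc (by omega)]
        have he2 : t + 1 - ((m : ℕ) : Fin ℓ) = s i + 1 := by
          have : t + 1 = s i + (((m + 1 : ℕ)) : Fin ℓ) := by
            rw [heq]; ring
          rw [this]; push_cast; ring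
        rw [he2]
        have hsival : (s i).val = i.val := rfl
        have hadd : (s i + 1).val = i.val + 1 := by
          rw [add_val', one_val' hℓ1, hsival, if_pos (by omega)]
        rw [sub_val', hadd]
        have : z0.val = ℓ - 1 := rfl
        rw [this, if_pos (by omega)]
        have := i.isLt
        omega

end Even

section Final
variable {ℓ : ℕ} [NeZero ℓ]

lemma two_mul_le (hℓ : 3 ≤ ℓ) {k : ℕ} (ψ : Fin k → Finset (Fin ℓ))
    (hψ : (cycleHG ℓ).IsCliqueEmb k ψ) : 2 * k ≤ ℓ * (cycleHG ℓ).wedOf ψ := by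
  classical
  set E := (cycleHG ℓ).edges with hE
  set cnt : Finset (Fin ℓ) → ℕ :=
    fun e => (Finset.univ.filter fun i : Fin k => ((ψ i) ∩ e).Nonempty).card with hcnt
  have h1 : ∀ e ∈ E, cnt e ≤ (cycleHG ℓ).wedOf ψ := fun e he => Finset.le_sup he
  have hsum1 : ∑ e ∈ E, cnt e ≤ E.card * (cycleHG ℓ).wedOf ψ := by
    calc ∑ e ∈ E, cnt e ≤ E.card • (cycleHG ℓ).wedOf ψ := Finset.sum_le_card_nsmul E cnt _ h1
      _ = E.card * (cycleHG ℓ).wedOf ψ := by rw [smul_eq_mul]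
  have hEcard : E.card ≤ ℓ := by
    calc E.card ≤ (Finset.univ : Finset (Fin ℓ)).card := Finset.card_image_le
      _ = ℓ := by simp
  have hswap : ∑ e ∈ E, cnt e
      = ∑ i : Fin k, (E.filter fun e => ((ψ i) ∩ e).Nonempty).card := by
    simp only [hcnt, Finset.card_filter]
    exact Finset.sum_comm
  have hper : ∀ i : Fin k, 2 ≤ (E.filter fun e => ((ψ i) ∩ e).Nonempty).card := by
    intro i
    obtain ⟨v, hv⟩ := hψ.1 i
    have hv2 : (v - 1) + 1 = v := sub_add_cancel v 1
    have he1 : ({v, v+1} : Finset (Fin ℓ)) ∈ E.filter fun e => ((ψ i) ∩ e).Nonempty := by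
      rw [Finset.mem_filter]
      exact ⟨edge_mem v, ⟨v, Finset.mem_inter.2 ⟨hv, by simp⟩⟩⟩
    have he2 : ({v - 1, (v-1)+1} : Finset (Fin ℓ)) ∈ E.filter fun e => ((ψ i) ∩ e).Nonempty := by
      rw [Finset.mem_filter]
      refine ⟨edge_mem (v-1), ⟨v, Finset.mem_inter.2 ⟨hv, ?_⟩⟩⟩
      rw [hv2]; simp
    have hne : ({v, v+1} : Finset (Fin ℓ)) ≠ ({v - 1, (v-1)+1} : Finset (Fin ℓ)) := by
      intro h
      have : v + 1 ∈ ({v - 1, (v-1)+1} : Finset (Fin ℓ)) := by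
        rw [← h]; simp
      rw [hv2, Finset.mem_insert, Finset.mem_singleton] at this
      have h1v := one_val' (show 1 < ℓ by omega)
      have hvlt := v.isLt
      rcases this with h2 | h2
      · have h3 := congrArg Fin.val h2
        rw [add_val', sub_val', h1v] at h3
        split at h3 <;> split at h3 <;> omega
      · have h3 := congrArg Fin.val h2
        rw [add_val', h1v] at h3
        split at h3 <;> omega
    calc 2 = ({({v, v+1} : Finset (Fin ℓ)), ({v - 1, (v-1)+1} : Finset (Fin ℓ))} :
            Finset (Finset (Fin ℓ))).card := (Finset.card_pair hne).symm
      _ ≤ _ := Finset.card_le_card (by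
          intro e he
          rw [Finset.mem_insert, Finset.mem_singleton] at he
          rcases he with rfl | rfl
          · exact he1
          · exact he2)
  have hlow : 2 * k ≤ ∑ e ∈ E, cnt e := by
    rw [hswap]
    calc 2 * k = ∑ _i : Fin k, 2 := by simp [mul_comm]
      _ ≤ _ := Finset.sum_le_sum (fun i _ => hper i)
  calc 2 * k ≤ E.card * (cycleHG ℓ).wedOf ψ := le_trans hlow hsum1
    _ ≤ ℓ * (cycleHG ℓ).wedOf ψ := Nat.mul_le_mul_right _ hEcard

lemma bdd_above (hℓ : 3 ≤ ℓ) :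
    BddAbove {x : ℝ | ∃ k : ℕ, 3 ≤ k ∧ x = (k : ℝ) / ((cycleHG ℓ).wed k : ℝ)} := by
  refine ⟨(ℓ : ℝ), ?_⟩
  rintro x ⟨k, hk, rfl⟩
  set S := {w | ∃ ψ : Fin k → Finset (Fin ℓ), (cycleHG ℓ).IsCliqueEmb k ψ ∧ (cycleHG ℓ).wedOf ψ ≤ w}
    with hS
  have hwed : (cycleHG ℓ).wed k = sInf S := rfl
  by_cases hne : S.Nonempty
  · obtain ⟨ψ, hψ, hw⟩ := Nat.sInf_mem hne
    have h2k : 2 * k ≤ ℓ * (cycleHG ℓ).wed k := by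
      calc 2 * k ≤ ℓ * (cycleHG ℓ).wedOf ψ := two_mul_le hℓ ψ hψ
        _ ≤ ℓ * sInf S := Nat.mul_le_mul_left _ hw
        _ = ℓ * (cycleHG ℓ).wed k := by rw [hwed]
    have hwpos : 0 < (cycleHG ℓ).wed k := by
      rcases Nat.eq_zero_or_pos ((cycleHG ℓ).wed k) with h0 | h
      · rw [h0, mul_zero] at h2k; omega
      · exact h
    rw [div_le_iff₀ (by exact_mod_cast hwpos)]
    have : (k : ℕ) ≤ ℓ * (cycleHG ℓ).wed k := by omega
    exact_mod_cast this
  · rw [Set.not_nonempty_iff_eq_empty] at hne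
    rw [hwed, hne, Nat.sInf_empty]
    simp

lemma final_bound (hℓ : 3 ≤ ℓ) {k₀ : ℕ} (hk : 3 ≤ k₀) (hkc : k₀ = 2 * ((ℓ + 1) / 2) - 1)
    (ψ : Fin k₀ → Finset (Fin ℓ)) (hemb : (cycleHG ℓ).IsCliqueEmb k₀ ψ)
    (hw : (cycleHG ℓ).wedOf ψ ≤ (ℓ + 1) / 2) :
    (2 : ℝ) - 1 / (((ℓ + 1) / 2 : ℕ) : ℝ) ≤ embPower (cycleHG ℓ) := by
  set c := (ℓ + 1) / 2 with hc
  have hc2 : 2 ≤ c := by omega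
  set S := {w | ∃ ψ' : Fin k₀ → Finset (Fin ℓ),
    (cycleHG ℓ).IsCliqueEmb k₀ ψ' ∧ (cycleHG ℓ).wedOf ψ' ≤ w} with hS
  have hwed : (cycleHG ℓ).wed k₀ = sInf S := rfl
  have hnem : S.Nonempty := ⟨c, ψ, hemb, hw⟩
  have hwedle : (cycleHG ℓ).wed k₀ ≤ c := by
    rw [hwed]; exact Nat.sInf_le ⟨ψ, hemb, hw⟩
  have hwpos : 0 < (cycleHG ℓ).wed k₀ := by
    obtain ⟨ψ', hψ', hw'⟩ := Nat.sInf_mem hnem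
    have h2k : 2 * k₀ ≤ ℓ * (cycleHG ℓ).wedOf ψ' := two_mul_le hℓ ψ' hψ'
    have h3 : ℓ * (cycleHG ℓ).wedOf ψ' ≤ ℓ * sInf S := Nat.mul_le_mul_left ℓ hw'
    rw [← hwed] at h3
    rcases Nat.eq_zero_or_pos ((cycleHG ℓ).wed k₀) with h0 | h
    · rw [h0, mul_zero] at h3; omega
    · exact h
  have hmem : ((k₀ : ℝ) / ((cycleHG ℓ).wed k₀ : ℝ)) ∈
      {x : ℝ | ∃ k : ℕ, 3 ≤ k ∧ x = (k : ℝ) / ((cycleHG ℓ).wed k : ℝ)} := ⟨k₀, hk, rfl⟩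
  have hle := le_csSup (bdd_above hℓ) hmem
  refine le_trans ?_ hle
  have hcpos : (0 : ℝ) < (c : ℝ) := by exact_mod_cast (by omega : 0 < c)
  have hwpos' : (0 : ℝ) < ((cycleHG ℓ).wed k₀ : ℝ) := by exact_mod_cast hwpos
  have hk₀c : (k₀ : ℝ) = 2 * (c : ℝ) - 1 := by
    have : (k₀ : ℕ) = 2 * c - 1 := hkc
    have h2 : ((2 * c - 1 : ℕ) : ℝ) = 2 * (c : ℝ) - 1 := by
      push_cast [Nat.cast_sub (by omega : 1 ≤ 2 * c)]
      ring
    rw [this, h2]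
  have step1 : (2 : ℝ) - 1 / (c : ℝ) = (k₀ : ℝ) / (c : ℝ) := by
    rw [hk₀c]
    field_simp
  rw [step1]
  have hcc : ((cycleHG ℓ).wed k₀ : ℝ) ≤ (c : ℝ) := by exact_mod_cast hwedle
  gcongr

end Final

/-- For the `ℓ`-cycle (`ℓ ≥ 3`): if `ℓ` is odd there is an embedding of the
`ℓ`-clique with weak edge depth `(ℓ+1)/2`; if `ℓ` is even there is an embedding
of the `(ℓ−1)`-clique with weak edge depth `ℓ/2`; hence the clique embedding
power is at least `2 − 1/⌈ℓ/2⌉`. -/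
theorem cycle_emb_lower_bound (ℓ : ℕ) [NeZero ℓ] (hℓ : 3 ≤ ℓ) :
    (Odd ℓ → ∃ ψ : Fin ℓ → Finset (Fin ℓ),
      (cycleHG ℓ).IsCliqueEmb ℓ ψ ∧ (cycleHG ℓ).wedOf ψ ≤ (ℓ + 1) / 2) ∧
    (Even ℓ → ∃ ψ : Fin (ℓ - 1) → Finset (Fin ℓ),
      (cycleHG ℓ).IsCliqueEmb (ℓ - 1) ψ ∧ (cycleHG ℓ).wedOf ψ ≤ ℓ / 2) ∧
    (2 : ℝ) - 1 / (((ℓ + 1) / 2 : ℕ) : ℝ) ≤ embPower (cycleHG ℓ) := by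
  rcases Nat.even_or_odd ℓ with he | ho
  · obtain ⟨ψ, h1, h2⟩ := even_emb hℓ he
    obtain ⟨c, hc⟩ := he
    refine ⟨fun ho => (Nat.not_odd_iff_even.mpr ⟨c, hc⟩ ho).elim, fun _ => ⟨ψ, h1, h2⟩, ?_⟩
    exact final_bound hℓ (by omega) (by omega) ψ h1 (by omega)
  · obtain ⟨ψ, h1, h2⟩ := odd_emb hℓ ho
    obtain ⟨c, hc⟩ := ho
    refine ⟨fun _ => ⟨ψ, h1, h2⟩, fun he => (Nat.not_odd_iff_even.mpr he ⟨c, hc⟩).elim, ?_⟩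
    exact final_bound hℓ (by omega) (by omega) ψ h1 (by omega)
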